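/- The map Ξ is a bijection from 𝒯(∞) onto the set of all functions from the positive roots {β_{i,k} : 1 ≤ i ≤ k ≤ r−1} ∪ {β_{i,r} : 1 ≤ i ≤ r−1} ∪ {γ_{i,k} : 1 ≤ i < k ≤ r−1} of D_r to the nonnegative integers; its inverse recovers the segment data from a function with values c_{i,k} at β_{i,k} and d_{i,k} at γ_{i,k} via ℓ_{i,k+1} = c_{i,k} for k ≤ r−2, ℓ_{i,r} = max(0, c_{i,r−1} − c_{i,r}), ℓ_{i,r̄} = max(0, c_{i,r} − c_{i,r−1}), ℓ_{i,ī} = min(c_{i,r−1}, c_{i,r}), and ℓ_{i,k̄} = d_{i,k}. Moreover, for every T ∈ 𝒯(∞), seg(T) = seg′(T) + e_D(T) equals the number of positive roots α with Ξ(T)(α) ≠ 0. -/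

import Mathlib

/-- The strict order on the type `D_r` alphabet
`{1 ≺ ⋯ ≺ r-1 ≺ r, r̄ ≺ \overline{r-1} ≺ ⋯ ≺ 1̄}`, encoded in `{1, …, 2r} ⊂ ℕ`
by `k ↦ k` for `k ≤ r`, `r̄ ↦ r+1`, and `k̄ ↦ 2r+1-k` for `k ≤ r-1`; the
symbols `r` and `r̄` (codes `r` and `r+1`) are incomparable. -/
def dltD (r : ℕ) (a b : ℕ) : Prop := a < b ∧ ¬(a = r ∧ b = r + 1)

/-- The weak order on the type `D_r` alphabet. -/
def dleD (r : ℕ) (a b : ℕ) : Prop := a = b ∨ dltD r a b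

/-- Marginally large semistandard Young tableaux of type `D_r`, on the
partially ordered alphabet above. Conditions: exactly `r-1` rows, rows weakly
increasing, columns strictly increasing, first column `1, …, r-1`, every entry
of row `i` is `≼ ī`, the symbols `r` and `r̄` never appear in the same row, and
the number of `i`-entries in row `i` exceeds the number of boxes in row `i+1`
by exactly one. -/
structure TabD (r : ℕ) where
  row : Fin (r - 1) → List ℕ
  entry_mem : ∀ i : Fin (r - 1), ∀ e ∈ row i, 1 ≤ e ∧ e ≤ 2 * r
  row_weak : ∀ i : Fin (r - 1), (row i).Chain' (dleD r)
  first_col : ∀ i : Fin (r - 1), (row i).head? = some (i.1 + 1)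
  row_bound : ∀ i : Fin (r - 1), ∀ e ∈ row i, dleD r e (2 * r - i.1)
  not_both : ∀ i : Fin (r - 1), ¬(r ∈ row i ∧ (r + 1) ∈ row i)
  col_le : ∀ i : Fin (r - 1), ∀ h : i.1 + 1 < r - 1,
    (row ⟨i.1 + 1, h⟩).length ≤ (row i).length
  col_strict : ∀ i : Fin (r - 1), ∀ h : i.1 + 1 < r - 1,
    ∀ j < (row ⟨i.1 + 1, h⟩).length,
      dltD r ((row i).getD j 0) ((row ⟨i.1 + 1, h⟩).getD j 0)
  marg_large : ∀ i : Fin (r - 1), (row i).count (i.1 + 1) =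
    (if h : i.1 + 1 < r - 1 then (row ⟨i.1 + 1, h⟩).length else 0) + 1

/-- `ℓ_{i,x}(T)`: the number of entries with code `x` in row `i` (row
`i : Fin (r-1)` has label `i+1`; `r̄` has code `r+1` and `k̄` has code `2r+1-k`
for `k ≤ r-1`). -/
def ellD (r : ℕ) (T : TabD r) (i : Fin (r - 1)) (x : ℕ) : ℕ := (T.row i).count x

/-- `seg′(T)`: the number of pairs `(i,x)` with `x ≻ i` and `ℓ_{i,x}(T) > 0`. -/
def segD' (r : ℕ) (T : TabD r) : ℕ :=
  ∑ i : Fin (r - 1),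
    ((Finset.Icc (i.1 + 2) (2 * r)).filter fun x => ellD r T i x ≠ 0).card

/-- `e_D(T)`: the number of rows `i` containing an `ī`-segment but neither an
`r`- nor an `r̄`-segment. -/
def eD (r : ℕ) (T : TabD r) : ℕ :=
  (Finset.univ.filter fun i : Fin (r - 1) =>
    ellD r T i (2 * r - i.1) ≠ 0 ∧ ellD r T i r = 0 ∧ ellD r T i (r + 1) = 0).card

/-- `seg(T) = seg′(T) + e_D(T)`. -/
def segD (r : ℕ) (T : TabD r) : ℕ := segD' r T + eD r T

/-- The positive root `β_{i,k} = α_i + ⋯ + α_k` of `D_r` (`1 ≤ i ≤ k ≤ r-1`),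
in simple-root coordinates. -/
def betaD (r : ℕ) (i k : ℕ) : Fin r → ℕ :=
  fun j => if i ≤ j.1 + 1 ∧ j.1 + 1 ≤ k then 1 else 0

/-- The positive root `β_{i,r} = α_i + ⋯ + α_{r-2} + α_r` of `D_r`
(`1 ≤ i ≤ r-1`), in simple-root coordinates. -/
def betaDr (r : ℕ) (i : ℕ) : Fin r → ℕ :=
  fun j => if i ≤ j.1 + 1 ∧ j.1 + 1 ≤ r - 2 then 1 else if j.1 + 1 = r then 1 else 0

/-- The positive root
`γ_{i,k} = α_i + ⋯ + α_{r-1} + α_r + α_{r-2} + ⋯ + α_k` of `D_r`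
(`1 ≤ i < k ≤ r-1`), in simple-root coordinates. -/
def gammaD (r : ℕ) (i k : ℕ) : Fin r → ℕ :=
  fun j => if i ≤ j.1 + 1 ∧ j.1 + 1 ≤ k - 1 then 1
    else if k ≤ j.1 + 1 ∧ j.1 + 1 ≤ r - 2 then 2
    else if j.1 + 1 = r - 1 ∨ j.1 + 1 = r then 1 else 0

/-- The set of positive roots of `D_r`. -/
def posRootsD (r : ℕ) : Finset (Fin r → ℕ) :=
  ((Finset.Icc 1 (r - 1) ×ˢ Finset.Icc 1 (r - 1)).filter fun p => p.1 ≤ p.2).image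
      (fun p => betaD r p.1 p.2) ∪
    (Finset.Icc 1 (r - 1)).image (fun i => betaDr r i) ∪
    ((Finset.Icc 1 (r - 1) ×ˢ Finset.Icc 1 (r - 1)).filter fun p => p.1 < p.2).image
      (fun p => gammaD r p.1 p.2)

/-- `Ξ(T)`, extended by zero to all vectors: `Ξ(T)(β_{i,k-1}) = ℓ_{i,k}(T)` for
`i < k ≤ r-1`, `Ξ(T)(β_{i,r-1}) = ℓ_{i,r}(T) + ℓ_{i,ī}(T)`,
`Ξ(T)(β_{i,r}) = ℓ_{i,r̄}(T) + ℓ_{i,ī}(T)`, and `Ξ(T)(γ_{i,k}) = ℓ_{i,k̄}(T)`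
for `i < k ≤ r-1`. -/
def XiD (r : ℕ) (T : TabD r) (v : Fin r → ℕ) : ℕ :=
  ∑ i : Fin (r - 1),
    ((∑ k ∈ Finset.Icc (i.1 + 2) (r - 1),
        if v = betaD r (i.1 + 1) (k - 1) then ellD r T i k else 0) +
      (if v = betaD r (i.1 + 1) (r - 1) then
        ellD r T i r + ellD r T i (2 * r - i.1) else 0) +
      (if v = betaDr r (i.1 + 1) then
        ellD r T i (r + 1) + ellD r T i (2 * r - i.1) else 0) +
      (∑ k ∈ Finset.Icc (i.1 + 2) (r - 1),
        if v = gammaD r (i.1 + 1) k then ellD r T i (2 * r + 1 - k) else 0))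

/-- `-wt(T) = Σ_α Ξ(T)(α)·α`, in simple-root coordinates. -/
def negwtD (r : ℕ) (T : TabD r) : Fin r → ℕ :=
  ∑ v ∈ posRootsD r, XiD r T v • v

section Aux
variable {r : ℕ}

lemma dleD_le {a b : ℕ} (h : dleD r a b) : a ≤ b := by
  rcases h with h | h
  · omega
  · exact le_of_lt h.1

lemma betaD_inj (hr : 4 ≤ r) {i k i' k' : ℕ} (hi : 1 ≤ i) (hik : i ≤ k) (hk : k ≤ r - 1)
    (hi' : 1 ≤ i') (hik' : i' ≤ k') (hk' : k' ≤ r - 1)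
    (h : betaD r i k = betaD r i' k') : i = i' ∧ k = k' := by
  have key : ∀ p : ℕ, (hp : p < r) → ((i ≤ p + 1 ∧ p + 1 ≤ k) ↔ (i' ≤ p + 1 ∧ p + 1 ≤ k')) := by
    intro p hp
    have e := congrFun h ⟨p, hp⟩
    simp only [betaD] at e
    split_ifs at e <;> omega
  have k1 := key (i - 1) (by omega)
  have k2 := key (i' - 1) (by omega)
  have k3 := key (k - 1) (by omega)
  have k4 := key (k' - 1) (by omega)
  omega

lemma betaD_ne_betaDr (hr : 4 ≤ r) {i k i' : ℕ} (hk : k ≤ r - 1) :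
    betaD r i k ≠ betaDr r i' := by
  intro h
  have e := congrFun h ⟨r - 1, by omega⟩
  simp only [betaD, betaDr] at e
  split_ifs at e <;> omega

lemma betaD_ne_gammaD (hr : 4 ≤ r) {i k i' k' : ℕ} (hk : k ≤ r - 1) :
    betaD r i k ≠ gammaD r i' k' := by
  intro h
  have e := congrFun h ⟨r - 1, by omega⟩
  simp only [betaD, gammaD] at e
  split_ifs at e <;> omega

lemma betaDr_ne_gammaD (hr : 4 ≤ r) {i i' k' : ℕ} (hk' : k' ≤ r - 1) :
    betaDr r i ≠ gammaD r i' k' := by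
  intro h
  have e := congrFun h ⟨r - 2, by omega⟩
  simp only [betaDr, gammaD] at e
  split_ifs at e <;> omega

lemma betaDr_inj (hr : 4 ≤ r) {i i' : ℕ} (hi : 1 ≤ i) (hi2 : i ≤ r - 1)
    (hi' : 1 ≤ i') (hi2' : i' ≤ r - 1) (h : betaDr r i = betaDr r i') : i = i' := by
  have e1 := congrFun h ⟨i - 1, by omega⟩
  have e2 := congrFun h ⟨i' - 1, by omega⟩
  simp only [betaDr] at e1 e2
  split_ifs at e1 e2 <;> omega

lemma gammaD_ne_zero_iff (hr : 4 ≤ r) {i k : ℕ} (hi : 1 ≤ i) (hik : i < k) (hk : k ≤ r - 1)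
    (p : ℕ) (hp : p < r) : gammaD r i k ⟨p, hp⟩ ≠ 0 ↔ i ≤ p + 1 := by
  simp only [gammaD]
  split_ifs <;> omega

lemma gammaD_inj (hr : 4 ≤ r) {i k i' k' : ℕ} (hi : 1 ≤ i) (hik : i < k) (hk : k ≤ r - 1)
    (hi' : 1 ≤ i') (hik' : i' < k') (hk' : k' ≤ r - 1)
    (h : gammaD r i k = gammaD r i' k') : i = i' ∧ k = k' := by
  have hii : i = i' := by
    have a1 := (gammaD_ne_zero_iff hr hi hik hk (i - 1) (by omega)).mpr (by omega)
    rw [congrFun h ⟨i - 1, by omega⟩] at a1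
    have b1 := (gammaD_ne_zero_iff hr hi' hik' hk' (i - 1) (by omega)).mp a1
    have a2 := (gammaD_ne_zero_iff hr hi' hik' hk' (i' - 1) (by omega)).mpr (by omega)
    rw [← congrFun h ⟨i' - 1, by omega⟩] at a2
    have b2 := (gammaD_ne_zero_iff hr hi hik hk (i' - 1) (by omega)).mp a2
    omega
  refine ⟨hii, ?_⟩
  subst hii
  have e3 := congrFun h ⟨k - 1, by omega⟩
  have e4 := congrFun h ⟨k' - 1, by omega⟩
  simp only [gammaD] at e3 e4
  split_ifs at e3 e4 <;> omega

end Aux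

section Eval
variable {r : ℕ}

lemma comp1_eq_zero (T : TabD r) (j : Fin (r - 1)) {v : Fin r → ℕ}
    (hv : ∀ k, j.1 + 2 ≤ k → k ≤ r - 1 → v ≠ betaD r (j.1 + 1) (k - 1)) :
    (∑ k ∈ Finset.Icc (j.1 + 2) (r - 1),
      if v = betaD r (j.1 + 1) (k - 1) then ellD r T j k else 0) = 0 :=
  Finset.sum_eq_zero fun k hk => if_neg (by
    rw [Finset.mem_Icc] at hk
    exact hv k hk.1 hk.2)

lemma comp4_eq_zero (T : TabD r) (j : Fin (r - 1)) {v : Fin r → ℕ}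
    (hv : ∀ k, j.1 + 2 ≤ k → k ≤ r - 1 → v ≠ gammaD r (j.1 + 1) k) :
    (∑ k ∈ Finset.Icc (j.1 + 2) (r - 1),
      if v = gammaD r (j.1 + 1) k then ellD r T j (2 * r + 1 - k) else 0) = 0 :=
  Finset.sum_eq_zero fun k hk => if_neg (by
    rw [Finset.mem_Icc] at hk
    exact hv k hk.1 hk.2)

lemma XiD_term_eq (T : TabD r) {v : Fin r → ℕ} {j : Fin (r - 1)} {c : ℕ}
    (h1 : (∑ k ∈ Finset.Icc (j.1 + 2) (r - 1),
      if v = betaD r (j.1 + 1) (k - 1) then ellD r T j k else 0) = c)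
    (h2 : (if v = betaD r (j.1 + 1) (r - 1) then
        ellD r T j r + ellD r T j (2 * r - j.1) else 0) = 0)
    (h3 : (if v = betaDr r (j.1 + 1) then
        ellD r T j (r + 1) + ellD r T j (2 * r - j.1) else 0) = 0)
    (h4 : (∑ k ∈ Finset.Icc (j.1 + 2) (r - 1),
      if v = gammaD r (j.1 + 1) k then ellD r T j (2 * r + 1 - k) else 0) = 0) :
    (∑ k ∈ Finset.Icc (j.1 + 2) (r - 1),
      if v = betaD r (j.1 + 1) (k - 1) then ellD r T j k else 0) +
    (if v = betaD r (j.1 + 1) (r - 1) then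
        ellD r T j r + ellD r T j (2 * r - j.1) else 0) +
    (if v = betaDr r (j.1 + 1) then
        ellD r T j (r + 1) + ellD r T j (2 * r - j.1) else 0) +
    (∑ k ∈ Finset.Icc (j.1 + 2) (r - 1),
      if v = gammaD r (j.1 + 1) k then ellD r T j (2 * r + 1 - k) else 0) = c := by
  omega

lemma XiD_term_eq' (T : TabD r) {v : Fin r → ℕ} {j : Fin (r - 1)} {c : ℕ}
    (h1 : (∑ k ∈ Finset.Icc (j.1 + 2) (r - 1),
      if v = betaD r (j.1 + 1) (k - 1) then ellD r T j k else 0) = 0)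
    (h2 : (if v = betaD r (j.1 + 1) (r - 1) then
        ellD r T j r + ellD r T j (2 * r - j.1) else 0) = c)
    (h3 : (if v = betaDr r (j.1 + 1) then
        ellD r T j (r + 1) + ellD r T j (2 * r - j.1) else 0) = 0)
    (h4 : (∑ k ∈ Finset.Icc (j.1 + 2) (r - 1),
      if v = gammaD r (j.1 + 1) k then ellD r T j (2 * r + 1 - k) else 0) = 0) :
    (∑ k ∈ Finset.Icc (j.1 + 2) (r - 1),
      if v = betaD r (j.1 + 1) (k - 1) then ellD r T j k else 0) +
    (if v = betaD r (j.1 + 1) (r - 1) then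
        ellD r T j r + ellD r T j (2 * r - j.1) else 0) +
    (if v = betaDr r (j.1 + 1) then
        ellD r T j (r + 1) + ellD r T j (2 * r - j.1) else 0) +
    (∑ k ∈ Finset.Icc (j.1 + 2) (r - 1),
      if v = gammaD r (j.1 + 1) k then ellD r T j (2 * r + 1 - k) else 0) = c := by
  omega

lemma XiD_term_eq'' (T : TabD r) {v : Fin r → ℕ} {j : Fin (r - 1)} {c : ℕ}
    (h1 : (∑ k ∈ Finset.Icc (j.1 + 2) (r - 1),
      if v = betaD r (j.1 + 1) (k - 1) then ellD r T j k else 0) = 0)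
    (h2 : (if v = betaD r (j.1 + 1) (r - 1) then
        ellD r T j r + ellD r T j (2 * r - j.1) else 0) = 0)
    (h3 : (if v = betaDr r (j.1 + 1) then
        ellD r T j (r + 1) + ellD r T j (2 * r - j.1) else 0) = c)
    (h4 : (∑ k ∈ Finset.Icc (j.1 + 2) (r - 1),
      if v = gammaD r (j.1 + 1) k then ellD r T j (2 * r + 1 - k) else 0) = 0) :
    (∑ k ∈ Finset.Icc (j.1 + 2) (r - 1),
      if v = betaD r (j.1 + 1) (k - 1) then ellD r T j k else 0) +
    (if v = betaD r (j.1 + 1) (r - 1) then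
        ellD r T j r + ellD r T j (2 * r - j.1) else 0) +
    (if v = betaDr r (j.1 + 1) then
        ellD r T j (r + 1) + ellD r T j (2 * r - j.1) else 0) +
    (∑ k ∈ Finset.Icc (j.1 + 2) (r - 1),
      if v = gammaD r (j.1 + 1) k then ellD r T j (2 * r + 1 - k) else 0) = c := by
  omega

lemma XiD_term_eq''' (T : TabD r) {v : Fin r → ℕ} {j : Fin (r - 1)} {c : ℕ}
    (h1 : (∑ k ∈ Finset.Icc (j.1 + 2) (r - 1),
      if v = betaD r (j.1 + 1) (k - 1) then ellD r T j k else 0) = 0)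
    (h2 : (if v = betaD r (j.1 + 1) (r - 1) then
        ellD r T j r + ellD r T j (2 * r - j.1) else 0) = 0)
    (h3 : (if v = betaDr r (j.1 + 1) then
        ellD r T j (r + 1) + ellD r T j (2 * r - j.1) else 0) = 0)
    (h4 : (∑ k ∈ Finset.Icc (j.1 + 2) (r - 1),
      if v = gammaD r (j.1 + 1) k then ellD r T j (2 * r + 1 - k) else 0) = c) :
    (∑ k ∈ Finset.Icc (j.1 + 2) (r - 1),
      if v = betaD r (j.1 + 1) (k - 1) then ellD r T j k else 0) +
    (if v = betaD r (j.1 + 1) (r - 1) then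
        ellD r T j r + ellD r T j (2 * r - j.1) else 0) +
    (if v = betaDr r (j.1 + 1) then
        ellD r T j (r + 1) + ellD r T j (2 * r - j.1) else 0) +
    (∑ k ∈ Finset.Icc (j.1 + 2) (r - 1),
      if v = gammaD r (j.1 + 1) k then ellD r T j (2 * r + 1 - k) else 0) = c := by
  omega

lemma XiD_eval_betaD (hr : 4 ≤ r) (T : TabD r) (i : Fin (r - 1)) {b : ℕ}
    (hab : i.1 + 1 ≤ b) (hb : b ≤ r - 2) :
    XiD r T (betaD r (i.1 + 1) b) = ellD r T i (b + 1) := by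
  have hi2 : i.1 ≤ r - 2 := by omega
  unfold XiD
  rw [Finset.sum_eq_single_of_mem i (Finset.mem_univ i)]
  · refine XiD_term_eq T ?_ ?_ ?_ ?_
    · rw [Finset.sum_eq_single_of_mem (b + 1) (by rw [Finset.mem_Icc]; omega)]
      · rw [if_pos (by norm_num)]
      · intro k hk hkb
        rw [Finset.mem_Icc] at hk
        refine if_neg fun h => hkb ?_
        obtain ⟨_, h2⟩ := betaD_inj hr (by omega) hab (by omega) (by omega) (by omega)
          (by omega) h
        omega
    · refine if_neg fun h => ?_
      obtain ⟨_, h2⟩ := betaD_inj hr (by omega) hab (by omega) (by omega) (by omega)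
        (by omega) h
      omega
    · exact if_neg (betaD_ne_betaDr hr (by omega))
    · exact comp4_eq_zero T i fun k _ hk2 => betaD_ne_gammaD hr (by omega)
  · intro j _ hj
    have hne : j.1 + 1 ≠ i.1 + 1 := fun hh => hj (Fin.ext (by omega))
    refine XiD_term_eq''' T ?_ ?_ ?_ ?_
    · refine comp1_eq_zero T j fun k hk1 hk2 h => ?_
      obtain ⟨h1, _⟩ := betaD_inj hr (by omega) hab (by omega) (by omega) (by omega)
        (by omega) h
      omega
    · refine if_neg fun h => ?_
      obtain ⟨h1, _⟩ := betaD_inj hr (by omega) hab (by omega) (by omega) (by omega)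
        (by omega) h
      omega
    · exact if_neg (betaD_ne_betaDr hr (by omega))
    · exact (comp4_eq_zero T j fun k _ hk2 => betaD_ne_gammaD hr (by omega))

lemma XiD_eval_betaD_top (hr : 4 ≤ r) (T : TabD r) (i : Fin (r - 1)) :
    XiD r T (betaD r (i.1 + 1) (r - 1)) = ellD r T i r + ellD r T i (2 * r - i.1) := by
  have hi2 : i.1 ≤ r - 2 := by omega
  unfold XiD
  rw [Finset.sum_eq_single_of_mem i (Finset.mem_univ i)]
  · refine XiD_term_eq' T ?_ (if_pos rfl) ?_ ?_
    · refine comp1_eq_zero T i fun k hk1 hk2 h => ?_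
      obtain ⟨_, h2⟩ := betaD_inj hr (by omega) (by omega) (by omega) (by omega) (by omega)
        (by omega) h
      omega
    · exact if_neg (betaD_ne_betaDr hr (by omega))
    · exact comp4_eq_zero T i fun k _ hk2 => betaD_ne_gammaD hr (by omega)
  · intro j _ hj
    have hne : j.1 + 1 ≠ i.1 + 1 := fun hh => hj (Fin.ext (by omega))
    refine XiD_term_eq''' T ?_ ?_ ?_ ?_
    · refine comp1_eq_zero T j fun k hk1 hk2 h => ?_
      obtain ⟨h1, h2⟩ := betaD_inj hr (by omega) (by omega) (by omega) (by omega) (by omega)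
        (by omega) h
      omega
    · refine if_neg fun h => ?_
      obtain ⟨h1, _⟩ := betaD_inj hr (by omega) (by omega) (by omega) (by omega) (by omega)
        (by omega) h
      omega
    · exact if_neg (betaD_ne_betaDr hr (by omega))
    · exact (comp4_eq_zero T j fun k _ hk2 => betaD_ne_gammaD hr (by omega))

lemma XiD_eval_betaDr (hr : 4 ≤ r) (T : TabD r) (i : Fin (r - 1)) :
    XiD r T (betaDr r (i.1 + 1)) = ellD r T i (r + 1) + ellD r T i (2 * r - i.1) := by
  have hi2 : i.1 ≤ r - 2 := by omega
  unfold XiD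
  rw [Finset.sum_eq_single_of_mem i (Finset.mem_univ i)]
  · refine XiD_term_eq'' T ?_ ?_ (if_pos rfl) ?_
    · exact comp1_eq_zero T i fun k hk1 hk2 h =>
        betaD_ne_betaDr hr (show k - 1 ≤ r - 1 by omega) h.symm
    · exact if_neg fun h => betaD_ne_betaDr hr (by omega) h.symm
    · exact comp4_eq_zero T i fun k _ hk2 => betaDr_ne_gammaD hr (by omega)
  · intro j _ hj
    have hne : j.1 + 1 ≠ i.1 + 1 := fun hh => hj (Fin.ext (by omega))
    refine XiD_term_eq''' T ?_ ?_ ?_ ?_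
    · exact comp1_eq_zero T j fun k hk1 hk2 h =>
        betaD_ne_betaDr hr (show k - 1 ≤ r - 1 by omega) h.symm
    · exact if_neg fun h => betaD_ne_betaDr hr (by omega) h.symm
    · refine if_neg fun h => ?_
      have := betaDr_inj hr (by omega) (by omega) (by omega) (by omega) h
      omega
    · exact (comp4_eq_zero T j fun k _ hk2 => betaDr_ne_gammaD hr (by omega))

lemma XiD_eval_gammaD (hr : 4 ≤ r) (T : TabD r) (i : Fin (r - 1)) {b : ℕ}
    (hab : i.1 + 2 ≤ b) (hb : b ≤ r - 1) :
    XiD r T (gammaD r (i.1 + 1) b) = ellD r T i (2 * r + 1 - b) := by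
  have hi2 : i.1 ≤ r - 2 := by omega
  unfold XiD
  rw [Finset.sum_eq_single_of_mem i (Finset.mem_univ i)]
  · refine XiD_term_eq''' T ?_ ?_ ?_ ?_
    · exact comp1_eq_zero T i fun k hk1 hk2 h =>
        betaD_ne_gammaD hr (show k - 1 ≤ r - 1 by omega) h.symm
    · exact if_neg fun h => betaD_ne_gammaD hr (by omega) h.symm
    · exact if_neg fun h => betaDr_ne_gammaD hr (by omega) h.symm
    · rw [Finset.sum_eq_single_of_mem b (by rw [Finset.mem_Icc]; omega)]
      · rw [if_pos rfl]
      · intro k hk hkb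
        rw [Finset.mem_Icc] at hk
        refine if_neg fun h => hkb ?_
        obtain ⟨_, h2⟩ := gammaD_inj hr (by omega) (by omega) (by omega) (by omega) (by omega)
          (by omega) h
        omega
  · intro j _ hj
    have hne : j.1 + 1 ≠ i.1 + 1 := fun hh => hj (Fin.ext (by omega))
    refine XiD_term_eq''' T ?_ ?_ ?_ ?_
    · exact comp1_eq_zero T j fun k hk1 hk2 h =>
        betaD_ne_gammaD hr (show k - 1 ≤ r - 1 by omega) h.symm
    · exact if_neg fun h => betaD_ne_gammaD hr (by omega) h.symm
    · exact if_neg fun h => betaDr_ne_gammaD hr (by omega) h.symm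
    · refine comp4_eq_zero T j fun k hk1 hk2 h => ?_
      obtain ⟨h1, _⟩ := gammaD_inj hr (by omega) (by omega) (by omega) (by omega) (by omega)
        (by omega) h
      omega

end Eval

section Lists
variable {r : ℕ}

lemma count_flatMap_replicate (f : ℕ → ℕ) (x : ℕ) :
    ∀ (n s : ℕ), ((List.range' s n).flatMap fun y => List.replicate (f y) y).count x
      = if s ≤ x ∧ x < s + n then f x else 0 := by
  intro n
  induction n with
  | zero => intro s; rw [if_neg (by omega)]; simp
  | succ m ih =>
    intro s
    rw [List.range'_succ]
    simp only [List.flatMap_cons, List.count_append, ih (s + 1), List.count_replicate,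
      beq_iff_eq]
    by_cases hx : x = s
    · subst hx; split_ifs <;> omega
    · split_ifs <;> omega

lemma length_flatMap_replicate (f : ℕ → ℕ) :
    ∀ (n s : ℕ), ((List.range' s n).flatMap fun y => List.replicate (f y) y).length
      = ∑ y ∈ Finset.Ico s (s + n), f y := by
  intro n
  induction n with
  | zero => intro s; simp
  | succ m ih =>
    intro s
    rw [List.range'_succ]
    simp only [List.flatMap_cons, List.length_append, List.length_replicate, ih (s + 1)]
    rw [show s + 1 + m = s + (m + 1) from by omega]
    exact (Finset.sum_eq_sum_Ico_succ_bot (by omega) f).symm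

lemma mem_flatMap_replicate {f : ℕ → ℕ} {x n s : ℕ} :
    x ∈ (List.range' s n).flatMap (fun y => List.replicate (f y) y)
      ↔ (s ≤ x ∧ x < s + n ∧ 0 < f x) := by
  rw [← List.count_pos_iff, count_flatMap_replicate]
  split_ifs with h
  · omega
  · omega

lemma chain'_le_flatMap_replicate (f : ℕ → ℕ) :
    ∀ (n s : ℕ), ((List.range' s n).flatMap fun y => List.replicate (f y) y).Chain' (· ≤ ·) := by
  intro n
  induction n with
  | zero => intro s; exact List.isChain_nil
  | succ m ih =>
    intro s
    rw [List.range'_succ, List.flatMap_cons]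
    apply List.IsChain.append
    · exact List.isChain_replicate_of_rel _ le_rfl
    · exact ih (s + 1)
    · intro a ha b hb
      have ha' : a = s := by
        have := List.mem_of_mem_getLast? ha
        exact List.eq_of_mem_replicate this
      have hb' : s + 1 ≤ b := by
        have := List.mem_of_mem_head? hb
        exact (mem_flatMap_replicate.1 this).1
      omega

lemma head_flatMap_replicate (f : ℕ → ℕ) (n s : ℕ) (hn : 0 < n) (hf : 0 < f s) :
    ((List.range' s n).flatMap fun y => List.replicate (f y) y).head? = some s := by
  obtain ⟨m, rfl⟩ : ∃ m, n = m + 1 := ⟨n - 1, by omega⟩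
  rw [List.range'_succ, List.flatMap_cons,
    show f s = (f s - 1) + 1 from by omega, List.replicate_succ]
  simp

lemma length_eq_sum_count (l : List ℕ) (s : Finset ℕ) (h : ∀ e ∈ l, e ∈ s) :
    l.length = ∑ x ∈ s, l.count x := by
  induction l with
  | nil => simp
  | cons e t ih =>
    simp only [List.length_cons, List.count_cons, beq_iff_eq]
    rw [Finset.sum_add_distrib, ← ih (fun e he => h e (List.mem_cons_of_mem _ he))]
    have he : (∑ x ∈ s, if e = x then 1 else 0) = 1 := by
      rw [Finset.sum_ite_eq s e (fun _ => 1), if_pos (h e (List.mem_cons_self (a := e) (l := t)))]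
    omega

lemma sorted_of_chain'_dleD {l : List ℕ} (h : l.Chain' (dleD r)) : l.Pairwise (· ≤ ·) := by
  rw [← List.isChain_iff_pairwise]
  exact List.IsChain.imp (fun a b hab => dleD_le hab) h

lemma mem_ge_head {l : List ℕ} {a : ℕ} (h : l.Chain' (dleD r)) (hh : l.head? = some a) :
    ∀ e ∈ l, a ≤ e := by
  have hs := sorted_of_chain'_dleD h
  cases l with
  | nil => simp at hh
  | cons b t =>
    simp only [List.head?_cons, Option.some.injEq] at hh
    subst hh
    intro e he
    rcases List.mem_cons.1 he with rfl | he
    · exact le_rfl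
    · exact List.rel_of_pairwise_cons hs he

end Lists

section TabFacts
variable {r : ℕ}

lemma ellD_lt_eq_zero (T : TabD r) (i : Fin (r - 1)) {x : ℕ} (hx : x < i.1 + 1) :
    ellD r T i x = 0 := by
  rw [ellD, List.count_eq_zero]
  intro hmem
  have := mem_ge_head (T.row_weak i) (T.first_col i) x hmem
  omega

lemma ellD_gt_eq_zero (T : TabD r) (i : Fin (r - 1)) {x : ℕ} (hx : 2 * r - i.1 < x) :
    ellD r T i x = 0 := by
  rw [ellD, List.count_eq_zero]
  intro hmem
  have := dleD_le (T.row_bound i x hmem)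
  omega

lemma ellD_prod_zero (T : TabD r) (i : Fin (r - 1)) :
    ellD r T i r = 0 ∨ ellD r T i (r + 1) = 0 := by
  by_contra hc
  push_neg at hc
  exact T.not_both i ⟨List.count_pos_iff.1 (Nat.pos_of_ne_zero hc.1),
    List.count_pos_iff.1 (Nat.pos_of_ne_zero hc.2)⟩

lemma row_length_eq_sum (hr : 4 ≤ r) (T : TabD r) (i : Fin (r - 1)) :
    (T.row i).length = ∑ x ∈ Finset.Icc (i.1 + 1) (2 * r - i.1), ellD r T i x := by
  refine length_eq_sum_count _ _ fun e he => ?_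
  rw [Finset.mem_Icc]
  have h1 := mem_ge_head (T.row_weak i) (T.first_col i) e he
  have h2 := dleD_le (T.row_bound i e he)
  omega

end TabFacts

section Mem
variable {r : ℕ}

lemma mem_posRootsD_betaD (hr : 4 ≤ r) {a b : ℕ} (ha : 1 ≤ a) (hab : a ≤ b)
    (hb : b ≤ r - 1) : betaD r a b ∈ posRootsD r := by
  apply Finset.mem_union_left
  apply Finset.mem_union_left
  rw [Finset.mem_image]
  exact ⟨(a, b), by
    rw [Finset.mem_filter, Finset.mem_product, Finset.mem_Icc, Finset.mem_Icc]
    exact ⟨⟨⟨ha, by omega⟩, ⟨by omega, hb⟩⟩, hab⟩, rfl⟩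

lemma mem_posRootsD_betaDr (hr : 4 ≤ r) {a : ℕ} (ha : 1 ≤ a) (hb : a ≤ r - 1) :
    betaDr r a ∈ posRootsD r := by
  apply Finset.mem_union_left
  apply Finset.mem_union_right
  rw [Finset.mem_image]
  exact ⟨a, by rw [Finset.mem_Icc]; exact ⟨ha, hb⟩, rfl⟩

lemma mem_posRootsD_gammaD (hr : 4 ≤ r) {a b : ℕ} (ha : 1 ≤ a) (hab : a < b)
    (hb : b ≤ r - 1) : gammaD r a b ∈ posRootsD r := by
  apply Finset.mem_union_right
  rw [Finset.mem_image]
  exact ⟨(a, b), by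
    rw [Finset.mem_filter, Finset.mem_product, Finset.mem_Icc, Finset.mem_Icc]
    exact ⟨⟨⟨ha, by omega⟩, ⟨by omega, hb⟩⟩, hab⟩, rfl⟩

end Mem

section Inj
variable {r : ℕ}

lemma row_eq_of_XiD (hr : 4 ≤ r) {T T' : TabD r}
    (h : ∀ v ∈ posRootsD r, XiD r T v = XiD r T' v) (i : Fin (r - 1))
    (ihj : ∀ j : Fin (r - 1), i.1 < j.1 → T.row j = T'.row j) : T.row i = T'.row i := by
  have hi2 : i.1 ≤ r - 2 := by omega
  have hbeta : ∀ b, i.1 + 1 ≤ b → b ≤ r - 2 →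
      ellD r T i (b + 1) = ellD r T' i (b + 1) := by
    intro b h1 h2
    have hh := h (betaD r (i.1 + 1) b) (mem_posRootsD_betaD hr (by omega) h1 (by omega))
    rwa [XiD_eval_betaD hr T i h1 h2, XiD_eval_betaD hr T' i h1 h2] at hh
  have htop := h (betaD r (i.1 + 1) (r - 1))
    (mem_posRootsD_betaD hr (by omega) (by omega) (by omega))
  rw [XiD_eval_betaD_top hr T i, XiD_eval_betaD_top hr T' i] at htop
  have hdr := h (betaDr r (i.1 + 1)) (mem_posRootsD_betaDr hr (by omega) (by omega))
  rw [XiD_eval_betaDr hr T i, XiD_eval_betaDr hr T' i] at hdr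
  have hgam : ∀ b, i.1 + 2 ≤ b → b ≤ r - 1 →
      ellD r T i (2 * r + 1 - b) = ellD r T' i (2 * r + 1 - b) := by
    intro b h1 h2
    have hh := h (gammaD r (i.1 + 1) b) (mem_posRootsD_gammaD hr (by omega) (by omega) h2)
    rwa [XiD_eval_gammaD hr T i h1 h2, XiD_eval_gammaD hr T' i h1 h2] at hh
  have hp := ellD_prod_zero T i
  have hp' := ellD_prod_zero T' i
  have hc : ∀ x, ellD r T i x = ellD r T' i x := by
    intro x
    by_cases h1 : x < i.1 + 1
    · rw [ellD_lt_eq_zero T i h1, ellD_lt_eq_zero T' i h1]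
    by_cases h2 : x = i.1 + 1
    · subst h2
      simp only [ellD]
      rw [T.marg_large i, T'.marg_large i]
      by_cases hlt : i.1 + 1 < r - 1
      · rw [dif_pos hlt, dif_pos hlt, ihj ⟨i.1 + 1, hlt⟩ (by simp)]
      · rw [dif_neg hlt, dif_neg hlt]
    by_cases h3 : x ≤ r - 1
    · have hh := hbeta (x - 1) (by omega) (by omega)
      rwa [show x - 1 + 1 = x from by omega] at hh
    by_cases h4 : x = r ∨ x = r + 1 ∨ x = 2 * r - i.1
    · rcases h4 with rfl | rfl | h4
      · omega
      · omega
      · subst h4; omega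
    by_cases h5 : x ≤ 2 * r - i.1 - 1
    · have hh := hgam (2 * r + 1 - x) (by omega) (by omega)
      rwa [show 2 * r + 1 - (2 * r + 1 - x) = x from by omega] at hh
    · rw [ellD_gt_eq_zero T i (by omega), ellD_gt_eq_zero T' i (by omega)]
  exact List.Perm.eq_of_pairwise'
    (sorted_of_chain'_dleD (T.row_weak i)) (sorted_of_chain'_dleD (T'.row_weak i)) (List.perm_iff_count.2 hc)

lemma TabD_ext {T T' : TabD r} (h : ∀ i, T.row i = T'.row i) : T = T' := by
  cases T; cases T'
  simp only [TabD.mk.injEq]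
  exact funext h

lemma XiD_inj (hr : 4 ≤ r) {T T' : TabD r}
    (h : ∀ v ∈ posRootsD r, XiD r T v = XiD r T' v) : T = T' := by
  have all : ∀ n, ∀ i : Fin (r - 1), r - 1 - i.1 ≤ n → T.row i = T'.row i := by
    intro n
    induction n with
    | zero => intro i hi; have := i.isLt; omega
    | succ m ih =>
      intro i hi
      exact row_eq_of_XiD hr h i fun j hj => ih j (by omega)
  exact TabD_ext fun i => all r i (by omega)

lemma recovery (hr : 4 ≤ r) (T : TabD r) (i : Fin (r - 1)) :
    (∀ k : ℕ, i.1 + 1 ≤ k → k ≤ r - 2 →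
      ellD r T i (k + 1) = XiD r T (betaD r (i.1 + 1) k)) ∧
    ellD r T i r
      = XiD r T (betaD r (i.1 + 1) (r - 1)) - XiD r T (betaDr r (i.1 + 1)) ∧
    ellD r T i (r + 1)
      = XiD r T (betaDr r (i.1 + 1)) - XiD r T (betaD r (i.1 + 1) (r - 1)) ∧
    ellD r T i (2 * r - i.1)
      = min (XiD r T (betaD r (i.1 + 1) (r - 1))) (XiD r T (betaDr r (i.1 + 1))) ∧
    (∀ k : ℕ, i.1 + 2 ≤ k → k ≤ r - 1 →
      ellD r T i (2 * r + 1 - k) = XiD r T (gammaD r (i.1 + 1) k)) := by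
  have hp := ellD_prod_zero T i
  rw [XiD_eval_betaD_top hr T i, XiD_eval_betaDr hr T i]
  exact ⟨fun k h1 h2 => (XiD_eval_betaD hr T i h1 h2).symm,
    by omega, by omega, by omega,
    fun k h1 h2 => (XiD_eval_gammaD hr T i h1 h2).symm⟩

end Inj

section Constr
variable {r : ℕ}

/-- The segment multiplicities determined by a function `g` on roots. -/
def Ldat (r : ℕ) (g : (Fin r → ℕ) → ℕ) (i x : ℕ) : ℕ :=
  if i + 2 ≤ x ∧ x ≤ r - 1 then g (betaD r (i + 1) (x - 1))
  else if x = r then g (betaD r (i + 1) (r - 1)) - g (betaDr r (i + 1))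
  else if x = r + 1 then g (betaDr r (i + 1)) - g (betaD r (i + 1) (r - 1))
  else if r + 2 ≤ x ∧ x ≤ 2 * r - i - 1 then g (gammaD r (i + 1) (2 * r + 1 - x))
  else if x = 2 * r - i then min (g (betaD r (i + 1) (r - 1))) (g (betaDr r (i + 1)))
  else 0

/-- Row lengths, from the bottom up. -/
def lenD (r : ℕ) (g : (Fin r → ℕ) → ℕ) (i : ℕ) : ℕ :=
  ∑ j ∈ Finset.Icc i (r - 2), (1 + ∑ x ∈ Finset.Icc (j + 2) (2 * r - j), Ldat r g j x)

def cntD (r : ℕ) (g : (Fin r → ℕ) → ℕ) (i x : ℕ) : ℕ :=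
  if x = i + 1 then lenD r g (i + 1) + 1 else Ldat r g i x

def rowD (r : ℕ) (g : (Fin r → ℕ) → ℕ) (i : ℕ) : List ℕ :=
  (List.range' (i + 1) (2 * r - 2 * i)).flatMap fun x => List.replicate (cntD r g i x) x

lemma lenD_top (hr : 4 ≤ r) (g : (Fin r → ℕ) → ℕ) : lenD r g (r - 1) = 0 := by
  rw [lenD, Finset.Icc_eq_empty (by omega), Finset.sum_empty]

lemma lenD_succ (hr : 4 ≤ r) (g : (Fin r → ℕ) → ℕ) {i : ℕ} (hi : i ≤ r - 2) :
    lenD r g i = 1 + (∑ x ∈ Finset.Icc (i + 2) (2 * r - i), Ldat r g i x) + lenD r g (i + 1) := by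
  conv_lhs => rw [lenD, ← Finset.Ico_add_one_right_eq_Icc,
    Finset.sum_eq_sum_Ico_succ_bot (show i < r - 2 + 1 by omega), Finset.Ico_add_one_right_eq_Icc]
  rw [lenD]

lemma count_rowD (g : (Fin r → ℕ) → ℕ) {i : ℕ} (hi : i ≤ r - 2) (x : ℕ) :
    (rowD r g i).count x = if i + 1 ≤ x ∧ x ≤ 2 * r - i then cntD r g i x else 0 := by
  rw [rowD, count_flatMap_replicate]
  by_cases h : i + 1 ≤ x ∧ x ≤ 2 * r - i
  · rw [if_pos (by omega), if_pos h]
  · rw [if_neg (by omega), if_neg h]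

lemma length_rowD (hr : 4 ≤ r) (g : (Fin r → ℕ) → ℕ) {i : ℕ} (hi : i ≤ r - 2) :
    (rowD r g i).length = lenD r g i := by
  rw [rowD, length_flatMap_replicate]
  have h1 : i + 1 + (2 * r - 2 * i) = 2 * r - i + 1 := by omega
  rw [h1, Finset.sum_eq_sum_Ico_succ_bot (show i + 1 < 2 * r - i + 1 by omega),
    Finset.Ico_add_one_right_eq_Icc]
  have h2 : (∑ x ∈ Finset.Icc (i + 1 + 1) (2 * r - i), cntD r g i x)
      = ∑ x ∈ Finset.Icc (i + 2) (2 * r - i), Ldat r g i x := by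
    apply Finset.sum_congr (by norm_num)
    intro x hx
    rw [Finset.mem_Icc] at hx
    rw [cntD, if_neg (by omega)]
  rw [h2, lenD_succ hr g hi, cntD, if_pos rfl]
  omega

lemma mem_rowD (g : (Fin r → ℕ) → ℕ) {i x : ℕ} (hi : i ≤ r - 2) :
    x ∈ rowD r g i ↔ (i + 1 ≤ x ∧ x ≤ 2 * r - i ∧ 0 < cntD r g i x) := by
  rw [rowD, mem_flatMap_replicate]
  omega

/-- The tableau associated with `g`. -/
def TabOf (hr : 4 ≤ r) (g : (Fin r → ℕ) → ℕ) : TabD r where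
  row i := rowD r g i.1
  entry_mem i e he := by
    have hi : i.1 ≤ r - 2 := by omega
    have := (mem_rowD g hi).1 he
    omega
  row_weak i := by
    have hi : i.1 ≤ r - 2 := by omega
    have hle : (rowD r g i.1).Chain' (· ≤ ·) := chain'_le_flatMap_replicate _ _ _
    have hnb : ¬(r ∈ rowD r g i.1 ∧ (r + 1) ∈ rowD r g i.1) := by
      rintro ⟨h1, h2⟩
      have c1 := (mem_rowD g hi).1 h1
      have c2 := (mem_rowD g hi).1 h2
      rw [cntD, if_neg (by omega)] at c1 c2
      rw [Ldat, if_neg (by omega), if_pos rfl] at c1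
      rw [Ldat, if_neg (by omega), if_neg (by omega), if_pos rfl] at c2
      omega
    refine List.Pairwise.isChain ?_
    refine List.Pairwise.imp_of_mem ?_ (List.isChain_iff_pairwise.1 hle)
    intro a b ha hb hab
    rcases Nat.eq_or_lt_of_le hab with rfl | hlt
    · exact Or.inl rfl
    · exact Or.inr ⟨hlt, fun ⟨h1, h2⟩ => hnb ⟨h1 ▸ ha, h2 ▸ hb⟩⟩
  first_col i := by
    have hi : i.1 ≤ r - 2 := by omega
    show ((List.range' (i.1 + 1) (2 * r - 2 * i.1)).flatMap
      fun x => List.replicate (cntD r g i.1 x) x).head? = some (i.1 + 1)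
    apply head_flatMap_replicate _ _ _ (by omega)
    rw [cntD, if_pos rfl]
    omega
  row_bound i e he := by
    have hi : i.1 ≤ r - 2 := by omega
    have := (mem_rowD g hi).1 he
    rcases Nat.eq_or_lt_of_le this.2.1 with h | h
    · exact Or.inl h
    · exact Or.inr ⟨h, by omega⟩
  not_both i := by
    have hi : i.1 ≤ r - 2 := by omega
    rintro ⟨h1, h2⟩
    have c1 := (mem_rowD g hi).1 h1
    have c2 := (mem_rowD g hi).1 h2
    rw [cntD, if_neg (by omega)] at c1 c2
    rw [Ldat, if_neg (by omega), if_pos rfl] at c1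
    rw [Ldat, if_neg (by omega), if_neg (by omega), if_pos rfl] at c2
    omega
  col_le i h := by
    have hi : i.1 ≤ r - 2 := by omega
    rw [length_rowD hr g (by simp; omega), length_rowD hr g hi]
    simp only [Fin.val_mk]
    rw [lenD_succ hr g hi]
    omega
  col_strict i h j hj := by
    have hi : i.1 ≤ r - 2 := by omega
    simp only [Fin.val_mk] at hj ⊢
    rw [length_rowD hr g (by omega)] at hj
    have hleft : (rowD r g i.1).getD j 0 = i.1 + 1 := by
      rw [rowD, show 2 * r - 2 * i.1 = (2 * r - 2 * i.1 - 1) + 1 from by omega,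
        List.range'_succ, List.flatMap_cons]
      rw [List.getD_append _ _ _ _ (by
        rw [List.length_replicate, cntD, if_pos rfl]
        have := lenD_succ hr g (show i.1 + 1 ≤ r - 2 by omega)
        omega)]
      rw [List.getD_eq_getElem _ _ (by
        simp only [List.length_replicate]
        rw [cntD, if_pos rfl]
        have := lenD_succ hr g (show i.1 + 1 ≤ r - 2 by omega)
        omega)]
      simp
    have hright : (rowD r g (i.1 + 1)).getD j 0 ∈ rowD r g (i.1 + 1) := by
      rw [List.getD_eq_getElem _ _ (by rw [length_rowD hr g (by omega)]; omega)]
      exact List.getElem_mem _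
    have hge := ((mem_rowD g (show i.1 + 1 ≤ r - 2 by omega)).1 hright).1
    rw [hleft]
    exact ⟨by omega, by omega⟩
  marg_large i := by
    have hi : i.1 ≤ r - 2 := by omega
    rw [count_rowD g hi, if_pos (by omega), cntD, if_pos rfl]
    by_cases h : i.1 + 1 < r - 1
    · rw [dif_pos h]
      simp only [Fin.val_mk]
      rw [length_rowD hr g (by omega)]
    · rw [dif_neg h]
      have : i.1 + 1 = r - 1 := by omega
      rw [this, lenD_top hr]

end Constr

section Surj
variable {r : ℕ}

lemma cntD_beta (g : (Fin r → ℕ) → ℕ) {i x : ℕ} (h1 : i + 2 ≤ x) (h2 : x ≤ r - 1) :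
    cntD r g i x = g (betaD r (i + 1) (x - 1)) := by
  rw [cntD, if_neg (by omega), Ldat, if_pos ⟨h1, h2⟩]

lemma cntD_r (hr : 4 ≤ r) (g : (Fin r → ℕ) → ℕ) {i : ℕ} (hi : i ≤ r - 2) :
    cntD r g i r = g (betaD r (i + 1) (r - 1)) - g (betaDr r (i + 1)) := by
  rw [cntD, if_neg (by omega), Ldat, if_neg (by omega), if_pos rfl]

lemma cntD_rbar (hr : 4 ≤ r) (g : (Fin r → ℕ) → ℕ) {i : ℕ} (hi : i ≤ r - 2) :
    cntD r g i (r + 1) = g (betaDr r (i + 1)) - g (betaD r (i + 1) (r - 1)) := by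
  rw [cntD, if_neg (by omega), Ldat, if_neg (by omega), if_neg (by omega), if_pos rfl]

lemma cntD_ibar (hr : 4 ≤ r) (g : (Fin r → ℕ) → ℕ) {i : ℕ} (hi : i ≤ r - 2) :
    cntD r g i (2 * r - i) = min (g (betaD r (i + 1) (r - 1))) (g (betaDr r (i + 1))) := by
  rw [cntD, if_neg (by omega), Ldat, if_neg (by omega), if_neg (by omega), if_neg (by omega),
    if_neg (by omega), if_pos rfl]

lemma cntD_gamma (hr : 4 ≤ r) (g : (Fin r → ℕ) → ℕ) {i x : ℕ} (h1 : r + 2 ≤ x)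
    (h2 : x ≤ 2 * r - i - 1) :
    cntD r g i x = g (gammaD r (i + 1) (2 * r + 1 - x)) := by
  rw [cntD, if_neg (by omega), Ldat, if_neg (by omega), if_neg (by omega), if_neg (by omega),
    if_pos ⟨h1, h2⟩]

lemma ellD_TabOf (hr : 4 ≤ r) (g : (Fin r → ℕ) → ℕ) (i : Fin (r - 1)) (x : ℕ) :
    ellD r (TabOf hr g) i x
      = if i.1 + 1 ≤ x ∧ x ≤ 2 * r - i.1 then cntD r g i.1 x else 0 :=
  count_rowD g (by omega) x

lemma posRootsD_cases {v : Fin r → ℕ} (hv : v ∈ posRootsD r) :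
    (∃ a b, 1 ≤ a ∧ a ≤ b ∧ b ≤ r - 1 ∧ v = betaD r a b) ∨
    (∃ a, 1 ≤ a ∧ a ≤ r - 1 ∧ v = betaDr r a) ∨
    (∃ a b, 1 ≤ a ∧ a < b ∧ b ≤ r - 1 ∧ v = gammaD r a b) := by
  rw [posRootsD, Finset.mem_union, Finset.mem_union] at hv
  rcases hv with (h | h) | h
  · rw [Finset.mem_image] at h
    obtain ⟨p, hp, rfl⟩ := h
    rw [Finset.mem_filter, Finset.mem_product, Finset.mem_Icc, Finset.mem_Icc] at hp
    exact Or.inl ⟨p.1, p.2, hp.1.1.1, hp.2, hp.1.2.2, rfl⟩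
  · rw [Finset.mem_image] at h
    obtain ⟨a, ha, rfl⟩ := h
    rw [Finset.mem_Icc] at ha
    exact Or.inr (Or.inl ⟨a, ha.1, ha.2, rfl⟩)
  · rw [Finset.mem_image] at h
    obtain ⟨p, hp, rfl⟩ := h
    rw [Finset.mem_filter, Finset.mem_product, Finset.mem_Icc, Finset.mem_Icc] at hp
    exact Or.inr (Or.inr ⟨p.1, p.2, hp.1.1.1, hp.2, hp.1.2.2, rfl⟩)

lemma XiD_TabOf (hr : 4 ≤ r) (g : (Fin r → ℕ) → ℕ) {v : Fin r → ℕ}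
    (hv : v ∈ posRootsD r) : XiD r (TabOf hr g) v = g v := by
  rcases posRootsD_cases hv with ⟨a, b, ha, hab, hb, rfl⟩ | ⟨a, ha, hb, rfl⟩ |
    ⟨a, b, ha, hab, hb, rfl⟩
  · obtain ⟨i, hi⟩ : ∃ i : Fin (r - 1), i.1 + 1 = a := ⟨⟨a - 1, by omega⟩, by simp; omega⟩
    rw [← hi] at hab ⊢
    by_cases hbtop : b ≤ r - 2
    · rw [XiD_eval_betaD hr _ i hab hbtop, ellD_TabOf, if_pos (by omega),
        cntD_beta g (by omega) (by omega), show b + 1 - 1 = b from rfl]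
    · have hb' : b = r - 1 := by omega
      subst hb'
      rw [XiD_eval_betaD_top hr _ i, ellD_TabOf, ellD_TabOf, if_pos (by omega),
        if_pos (by omega), cntD_r hr g (by omega), cntD_ibar hr g (by omega)]
      omega
  · obtain ⟨i, hi⟩ : ∃ i : Fin (r - 1), i.1 + 1 = a := ⟨⟨a - 1, by omega⟩, by simp; omega⟩
    rw [← hi]
    rw [XiD_eval_betaDr hr _ i, ellD_TabOf, ellD_TabOf, if_pos (by omega),
      if_pos (by omega), cntD_rbar hr g (by omega), cntD_ibar hr g (by omega)]
    omega
  · obtain ⟨i, hi⟩ : ∃ i : Fin (r - 1), i.1 + 1 = a := ⟨⟨a - 1, by omega⟩, by simp; omega⟩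
    rw [← hi] at hab ⊢
    rw [XiD_eval_gammaD hr _ i (by omega) hb, ellD_TabOf, if_pos (by omega),
      cntD_gamma hr g (by omega) (by omega), show 2 * r + 1 - (2 * r + 1 - b) = b from by omega]

lemma XiD_bijective (hr : 4 ≤ r) :
    Function.Bijective
      (fun (T : TabD r) (α : {v // v ∈ posRootsD r}) => XiD r T α.1) := by
  constructor
  · intro T T' h
    refine XiD_inj hr fun v hv => ?_
    exact congrFun h ⟨v, hv⟩
  · intro f
    refine ⟨TabOf hr (fun v => if h : v ∈ posRootsD r then f ⟨v, h⟩ else 0), ?_⟩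
    funext α
    obtain ⟨v, hv⟩ := α
    simp only
    rw [XiD_TabOf hr _ hv, dif_pos hv]

end Surj

section RowCount
variable {r : ℕ}

lemma sum_Icc_split (f : ℕ → ℕ) {a b c : ℕ} (h1 : a ≤ b + 1) (h2 : b ≤ c) :
    (∑ x ∈ Finset.Icc a c, f x)
      = (∑ x ∈ Finset.Icc a b, f x) + ∑ x ∈ Finset.Icc (b + 1) c, f x := by
  rw [← Finset.Ico_add_one_right_eq_Icc, ← Finset.Ico_add_one_right_eq_Icc, ← Finset.Ico_add_one_right_eq_Icc,
    ← Finset.sum_Ico_consecutive f h1 (show b + 1 ≤ c + 1 by omega)]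

lemma row_total (hr : 4 ≤ r) (T : TabD r) (i : Fin (r - 1)) :
    ((Finset.Icc (i.1 + 2) (2 * r)).filter fun x => ellD r T i x ≠ 0).card
      + (if ellD r T i (2 * r - i.1) ≠ 0 ∧ ellD r T i r = 0 ∧ ellD r T i (r + 1) = 0
          then 1 else 0)
    = (∑ b ∈ Finset.Icc (i.1 + 1) (r - 1),
        if XiD r T (betaD r (i.1 + 1) b) ≠ 0 then 1 else 0)
      + (if XiD r T (betaDr r (i.1 + 1)) ≠ 0 then 1 else 0)
      + (∑ b ∈ Finset.Icc (i.1 + 2) (r - 1),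
        if XiD r T (gammaD r (i.1 + 1) b) ≠ 0 then 1 else 0) := by
  have hi2 : i.1 ≤ r - 2 := by omega
  have hprod := ellD_prod_zero T i
  have L0 : ((Finset.Icc (i.1 + 2) (2 * r)).filter fun x => ellD r T i x ≠ 0).card
      = ∑ x ∈ Finset.Icc (i.1 + 2) (2 * r), if ellD r T i x ≠ 0 then 1 else 0 :=
    Finset.card_filter _ _
  have s1 : (∑ x ∈ Finset.Icc (i.1 + 2) (2 * r), if ellD r T i x ≠ 0 then 1 else 0)
      = (∑ x ∈ Finset.Icc (i.1 + 2) (r - 1), if ellD r T i x ≠ 0 then 1 else 0)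
        + ∑ x ∈ Finset.Icc (r - 1 + 1) (2 * r), if ellD r T i x ≠ 0 then 1 else 0 :=
    sum_Icc_split _ (by omega) (by omega)
  rw [show r - 1 + 1 = r from by omega] at s1
  have s2 : (∑ x ∈ Finset.Icc r (2 * r), if ellD r T i x ≠ 0 then 1 else 0)
      = (∑ x ∈ Finset.Icc r (r + 1), if ellD r T i x ≠ 0 then 1 else 0)
        + ∑ x ∈ Finset.Icc (r + 1 + 1) (2 * r), if ellD r T i x ≠ 0 then 1 else 0 :=
    sum_Icc_split _ (by omega) (by omega)
  rw [show r + 1 + 1 = r + 2 from rfl] at s2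
  have s3 : (∑ x ∈ Finset.Icc r (r + 1), if ellD r T i x ≠ 0 then 1 else 0)
      = (∑ x ∈ Finset.Icc r r, if ellD r T i x ≠ 0 then 1 else 0)
        + ∑ x ∈ Finset.Icc (r + 1) (r + 1), if ellD r T i x ≠ 0 then 1 else 0 :=
    sum_Icc_split _ (by omega) (by omega)
  rw [Finset.Icc_self, Finset.Icc_self, Finset.sum_singleton, Finset.sum_singleton] at s3
  have s4 : (∑ x ∈ Finset.Icc (r + 2) (2 * r), if ellD r T i x ≠ 0 then 1 else 0)
      = (∑ x ∈ Finset.Icc (r + 2) (2 * r - i.1 - 1), if ellD r T i x ≠ 0 then 1 else 0)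
        + ∑ x ∈ Finset.Icc (2 * r - i.1 - 1 + 1) (2 * r), if ellD r T i x ≠ 0 then 1 else 0 :=
    sum_Icc_split _ (by omega) (by omega)
  rw [show 2 * r - i.1 - 1 + 1 = 2 * r - i.1 from by omega] at s4
  have s5 : (∑ x ∈ Finset.Icc (2 * r - i.1) (2 * r), if ellD r T i x ≠ 0 then 1 else 0)
      = (∑ x ∈ Finset.Icc (2 * r - i.1) (2 * r - i.1), if ellD r T i x ≠ 0 then 1 else 0)
        + ∑ x ∈ Finset.Icc (2 * r - i.1 + 1) (2 * r), if ellD r T i x ≠ 0 then 1 else 0 :=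
    sum_Icc_split _ (by omega) (by omega)
  rw [Finset.Icc_self, Finset.sum_singleton] at s5
  have s6 : (∑ x ∈ Finset.Icc (2 * r - i.1 + 1) (2 * r),
      if ellD r T i x ≠ 0 then 1 else 0) = 0 := by
    refine Finset.sum_eq_zero fun x hx => ?_
    rw [Finset.mem_Icc] at hx
    exact if_neg fun hne => hne (ellD_gt_eq_zero T i (by omega))
  have t1 : (∑ b ∈ Finset.Icc (i.1 + 1) (r - 1),
      if XiD r T (betaD r (i.1 + 1) b) ≠ 0 then 1 else 0)
      = (∑ b ∈ Finset.Icc (i.1 + 1) (r - 2),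
          if XiD r T (betaD r (i.1 + 1) b) ≠ 0 then 1 else 0)
        + ∑ b ∈ Finset.Icc (r - 2 + 1) (r - 1),
          if XiD r T (betaD r (i.1 + 1) b) ≠ 0 then 1 else 0 :=
    sum_Icc_split _ (by omega) (by omega)
  rw [show r - 2 + 1 = r - 1 from by omega, Finset.Icc_self, Finset.sum_singleton] at t1
  have M1 : (∑ b ∈ Finset.Icc (i.1 + 1) (r - 2),
      if XiD r T (betaD r (i.1 + 1) b) ≠ 0 then 1 else 0)
      = ∑ x ∈ Finset.Icc (i.1 + 2) (r - 1), if ellD r T i x ≠ 0 then 1 else 0 := by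
    rw [← Finset.Ico_add_one_right_eq_Icc, ← Finset.Ico_add_one_right_eq_Icc, Finset.sum_Ico_eq_sum_range,
      Finset.sum_Ico_eq_sum_range,
      show r - 2 + 1 - (i.1 + 1) = r - 2 - i.1 from by omega,
      show r - 1 + 1 - (i.1 + 2) = r - 2 - i.1 from by omega]
    refine Finset.sum_congr rfl fun j hj => ?_
    rw [Finset.mem_range] at hj
    rw [XiD_eval_betaD hr T i (by omega) (by omega),
      show i.1 + 1 + j + 1 = i.1 + 2 + j from by omega]
  have M3 : (∑ b ∈ Finset.Icc (i.1 + 2) (r - 1),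
      if XiD r T (gammaD r (i.1 + 1) b) ≠ 0 then 1 else 0)
      = ∑ x ∈ Finset.Icc (r + 2) (2 * r - i.1 - 1), if ellD r T i x ≠ 0 then 1 else 0 := by
    have M3b : (∑ j ∈ Finset.range (r - 2 - i.1),
        if ellD r T i (r + 2 + (r - 2 - i.1 - 1 - j)) ≠ 0 then 1 else 0)
        = ∑ j ∈ Finset.range (r - 2 - i.1), if ellD r T i (r + 2 + j) ≠ 0 then 1 else 0 :=
      Finset.sum_range_reflect (fun x => if ellD r T i (r + 2 + x) ≠ 0 then 1 else 0)
        (r - 2 - i.1)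
    rw [← Finset.Ico_add_one_right_eq_Icc, ← Finset.Ico_add_one_right_eq_Icc, Finset.sum_Ico_eq_sum_range,
      Finset.sum_Ico_eq_sum_range,
      show r - 1 + 1 - (i.1 + 2) = r - 2 - i.1 from by omega,
      show 2 * r - i.1 - 1 + 1 - (r + 2) = r - 2 - i.1 from by omega, ← M3b]
    refine Finset.sum_congr rfl fun j hj => ?_
    rw [Finset.mem_range] at hj
    rw [XiD_eval_gammaD hr T i (by omega) (by omega),
      show 2 * r + 1 - (i.1 + 2 + j) = r + 2 + (r - 2 - i.1 - 1 - j) from by omega]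
  have MID : (if XiD r T (betaD r (i.1 + 1) (r - 1)) ≠ 0 then 1 else 0)
      + (if XiD r T (betaDr r (i.1 + 1)) ≠ 0 then 1 else 0)
      = (if ellD r T i r ≠ 0 then 1 else 0) + (if ellD r T i (r + 1) ≠ 0 then 1 else 0)
        + (if ellD r T i (2 * r - i.1) ≠ 0 then 1 else 0)
        + (if ellD r T i (2 * r - i.1) ≠ 0 ∧ ellD r T i r = 0 ∧ ellD r T i (r + 1) = 0
            then 1 else 0) := by
    rw [XiD_eval_betaD_top hr T i, XiD_eval_betaDr hr T i]
    split_ifs <;> omega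
  rw [L0]
  omega

end RowCount

section Assemble
variable {r : ℕ}

lemma sum_Icc_one_fin (hr : 4 ≤ r) (F : ℕ → ℕ) :
    (∑ a ∈ Finset.Icc 1 (r - 1), F a) = ∑ i : Fin (r - 1), F (i.1 + 1) := by
  rw [← Finset.Ico_add_one_right_eq_Icc, Finset.sum_Ico_eq_sum_range,
    show r - 1 + 1 - 1 = r - 1 from by omega,
    Fin.sum_univ_eq_sum_range (fun j => F (j + 1)) (r - 1)]
  exact Finset.sum_congr rfl fun j _ => by rw [Nat.add_comm 1 j]

lemma seg_eq_card (hr : 4 ≤ r) (T : TabD r) :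
    segD r T = ((posRootsD r).filter fun v => XiD r T v ≠ 0).card := by
  classical
  -- LHS as a single sum over rows
  have hE : eD r T = ∑ i : Fin (r - 1),
      if ellD r T i (2 * r - i.1) ≠ 0 ∧ ellD r T i r = 0 ∧ ellD r T i (r + 1) = 0
        then 1 else 0 := by
    rw [eD, Finset.card_filter]
  have hL : segD r T = ∑ i : Fin (r - 1),
      (((Finset.Icc (i.1 + 2) (2 * r)).filter fun x => ellD r T i x ≠ 0).card
        + (if ellD r T i (2 * r - i.1) ≠ 0 ∧ ellD r T i r = 0 ∧ ellD r T i (r + 1) = 0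
            then 1 else 0)) := by
    rw [segD, hE, segD', ← Finset.sum_add_distrib]
  -- injectivity of the parametrizations
  have hinjA : Set.InjOn (fun p : ℕ × ℕ => betaD r p.1 p.2)
      ↑((Finset.Icc 1 (r - 1) ×ˢ Finset.Icc 1 (r - 1)).filter fun p => p.1 ≤ p.2) := by
    intro p hp q hq h
    rw [Finset.mem_coe, Finset.mem_filter, Finset.mem_product, Finset.mem_Icc,
      Finset.mem_Icc] at hp hq
    obtain ⟨h1, h2⟩ := betaD_inj hr hp.1.1.1 hp.2 hp.1.2.2 hq.1.1.1 hq.2 hq.1.2.2 h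
    exact Prod.ext h1 h2
  have hinjB : Set.InjOn (fun a => betaDr r a) ↑(Finset.Icc 1 (r - 1)) := by
    intro p hp q hq h
    rw [Finset.mem_coe, Finset.mem_Icc] at hp hq
    exact betaDr_inj hr hp.1 hp.2 hq.1 hq.2 h
  have hinjC : Set.InjOn (fun p : ℕ × ℕ => gammaD r p.1 p.2)
      ↑((Finset.Icc 1 (r - 1) ×ˢ Finset.Icc 1 (r - 1)).filter fun p => p.1 < p.2) := by
    intro p hp q hq h
    rw [Finset.mem_coe, Finset.mem_filter, Finset.mem_product, Finset.mem_Icc,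
      Finset.mem_Icc] at hp hq
    obtain ⟨h1, h2⟩ := gammaD_inj hr hp.1.1.1 hp.2 hp.1.2.2 hq.1.1.1 hq.2 hq.1.2.2 h
    exact Prod.ext h1 h2
  -- disjointness
  have hd1 : Disjoint
      (((((Finset.Icc 1 (r - 1) ×ˢ Finset.Icc 1 (r - 1)).filter fun p => p.1 ≤ p.2).image
        (fun p => betaD r p.1 p.2))).filter fun v => XiD r T v ≠ 0)
      (((Finset.Icc 1 (r - 1)).image (fun i => betaDr r i)).filter
        fun v => XiD r T v ≠ 0) := by
    rw [Finset.disjoint_left]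
    intro v hv1 hv2
    obtain ⟨p, hp, rfl⟩ := Finset.mem_image.1 (Finset.mem_filter.1 hv1).1
    obtain ⟨a, _, hEq⟩ := Finset.mem_image.1 (Finset.mem_filter.1 hv2).1
    rw [Finset.mem_filter, Finset.mem_product, Finset.mem_Icc, Finset.mem_Icc] at hp
    exact betaD_ne_betaDr hr hp.1.2.2 hEq.symm
  have hd2 : Disjoint
      ((((((Finset.Icc 1 (r - 1) ×ˢ Finset.Icc 1 (r - 1)).filter fun p => p.1 ≤ p.2).image
          (fun p => betaD r p.1 p.2))).filter fun v => XiD r T v ≠ 0)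
        ∪ (((Finset.Icc 1 (r - 1)).image (fun i => betaDr r i)).filter
          fun v => XiD r T v ≠ 0))
      (((((Finset.Icc 1 (r - 1) ×ˢ Finset.Icc 1 (r - 1)).filter fun p => p.1 < p.2).image
        (fun p => gammaD r p.1 p.2))).filter fun v => XiD r T v ≠ 0) := by
    rw [Finset.disjoint_left]
    intro v hv1 hv2
    obtain ⟨q, hq, hEq⟩ := Finset.mem_image.1 (Finset.mem_filter.1 hv2).1
    rw [Finset.mem_filter, Finset.mem_product, Finset.mem_Icc, Finset.mem_Icc] at hq
    rcases Finset.mem_union.1 hv1 with h | h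
    · obtain ⟨p, hp, rfl⟩ := Finset.mem_image.1 (Finset.mem_filter.1 h).1
      rw [Finset.mem_filter, Finset.mem_product, Finset.mem_Icc, Finset.mem_Icc] at hp
      exact betaD_ne_gammaD hr hp.1.2.2 hEq.symm
    · obtain ⟨a, _, rfl⟩ := Finset.mem_image.1 (Finset.mem_filter.1 h).1
      exact betaDr_ne_gammaD hr hq.1.2.2 hEq.symm
  -- the three cards
  have cA : (((((Finset.Icc 1 (r - 1) ×ˢ Finset.Icc 1 (r - 1)).filter fun p => p.1 ≤ p.2).image
      (fun p => betaD r p.1 p.2))).filter fun v => XiD r T v ≠ 0).card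
      = ∑ a ∈ Finset.Icc 1 (r - 1), ∑ b ∈ Finset.Icc 1 (r - 1),
          if a ≤ b ∧ XiD r T (betaD r a b) ≠ 0 then 1 else 0 := by
    rw [Finset.filter_image,
      Finset.card_image_of_injOn (hinjA.mono (Finset.coe_subset.2 (Finset.filter_subset _ _))),
      Finset.filter_filter, Finset.card_filter, Finset.sum_product]
  have cB : ((((Finset.Icc 1 (r - 1)).image (fun i => betaDr r i))).filter
      fun v => XiD r T v ≠ 0).card
      = ∑ a ∈ Finset.Icc 1 (r - 1), if XiD r T (betaDr r a) ≠ 0 then 1 else 0 := by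
    rw [Finset.filter_image,
      Finset.card_image_of_injOn (hinjB.mono (Finset.coe_subset.2 (Finset.filter_subset _ _))),
      Finset.card_filter]
  have cC : (((((Finset.Icc 1 (r - 1) ×ˢ Finset.Icc 1 (r - 1)).filter fun p => p.1 < p.2).image
      (fun p => gammaD r p.1 p.2))).filter fun v => XiD r T v ≠ 0).card
      = ∑ a ∈ Finset.Icc 1 (r - 1), ∑ b ∈ Finset.Icc 1 (r - 1),
          if a < b ∧ XiD r T (gammaD r a b) ≠ 0 then 1 else 0 := by
    rw [Finset.filter_image,
      Finset.card_image_of_injOn (hinjC.mono (Finset.coe_subset.2 (Finset.filter_subset _ _))),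
      Finset.filter_filter, Finset.card_filter, Finset.sum_product]
  -- inner sums
  have cA2 : ∀ a ∈ Finset.Icc 1 (r - 1),
      (∑ b ∈ Finset.Icc 1 (r - 1), if a ≤ b ∧ XiD r T (betaD r a b) ≠ 0 then 1 else 0)
      = ∑ b ∈ Finset.Icc a (r - 1), if XiD r T (betaD r a b) ≠ 0 then 1 else 0 := by
    intro a ha
    rw [Finset.mem_Icc] at ha
    have hfe : (Finset.Icc 1 (r - 1)).filter (fun b => a ≤ b) = Finset.Icc a (r - 1) := by
      ext x
      rw [Finset.mem_filter, Finset.mem_Icc, Finset.mem_Icc]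
      omega
    rw [← hfe, Finset.sum_filter]
    refine Finset.sum_congr rfl fun b _ => ?_
    split_ifs <;> omega
  have cC2 : ∀ a ∈ Finset.Icc 1 (r - 1),
      (∑ b ∈ Finset.Icc 1 (r - 1), if a < b ∧ XiD r T (gammaD r a b) ≠ 0 then 1 else 0)
      = ∑ b ∈ Finset.Icc (a + 1) (r - 1), if XiD r T (gammaD r a b) ≠ 0 then 1 else 0 := by
    intro a ha
    have hfe : (Finset.Icc 1 (r - 1)).filter (fun b => a < b) = Finset.Icc (a + 1) (r - 1) := by
      ext x
      rw [Finset.mem_filter, Finset.mem_Icc, Finset.mem_Icc]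
      omega
    rw [← hfe, Finset.sum_filter]
    refine Finset.sum_congr rfl fun b _ => ?_
    split_ifs <;> omega
  have cA4 : (∑ a ∈ Finset.Icc 1 (r - 1), ∑ b ∈ Finset.Icc a (r - 1),
      if XiD r T (betaD r a b) ≠ 0 then 1 else 0)
      = ∑ i : Fin (r - 1), ∑ b ∈ Finset.Icc (i.1 + 1) (r - 1),
          if XiD r T (betaD r (i.1 + 1) b) ≠ 0 then 1 else 0 :=
    sum_Icc_one_fin hr _
  have cB4 : (∑ a ∈ Finset.Icc 1 (r - 1), if XiD r T (betaDr r a) ≠ 0 then 1 else 0)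
      = ∑ i : Fin (r - 1), if XiD r T (betaDr r (i.1 + 1)) ≠ 0 then 1 else 0 :=
    sum_Icc_one_fin hr _
  have cC4 : (∑ a ∈ Finset.Icc 1 (r - 1), ∑ b ∈ Finset.Icc (a + 1) (r - 1),
      if XiD r T (gammaD r a b) ≠ 0 then 1 else 0)
      = ∑ i : Fin (r - 1), ∑ b ∈ Finset.Icc (i.1 + 1 + 1) (r - 1),
          if XiD r T (gammaD r (i.1 + 1) b) ≠ 0 then 1 else 0 :=
    sum_Icc_one_fin hr _
  have hR : ((posRootsD r).filter fun v => XiD r T v ≠ 0).card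
      = ∑ i : Fin (r - 1),
        ((∑ b ∈ Finset.Icc (i.1 + 1) (r - 1),
            if XiD r T (betaD r (i.1 + 1) b) ≠ 0 then 1 else 0)
          + (if XiD r T (betaDr r (i.1 + 1)) ≠ 0 then 1 else 0)
          + ∑ b ∈ Finset.Icc (i.1 + 2) (r - 1),
              if XiD r T (gammaD r (i.1 + 1) b) ≠ 0 then 1 else 0) := by
    rw [posRootsD, Finset.filter_union, Finset.filter_union,
      Finset.card_union_of_disjoint hd2, Finset.card_union_of_disjoint hd1,
      cA, cB, cC, Finset.sum_congr rfl cA2, Finset.sum_congr rfl cC2, cA4, cB4, cC4,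
      ← Finset.sum_add_distrib, ← Finset.sum_add_distrib]
  rw [hL, hR]
  exact Finset.sum_congr rfl fun i _ => row_total hr T i

end Assemble


/-- `Ξ` is a bijection from `𝒯(∞)` of type `D_r` onto the set of
all functions from the positive roots of `D_r` to `ℕ`; its inverse recovers
the segment data via `ℓ_{i,k+1} = c_{i,k}` (`k ≤ r-2`),
`ℓ_{i,r} = max(0, c_{i,r-1} - c_{i,r})`, `ℓ_{i,r̄} = max(0, c_{i,r} - c_{i,r-1})`,
`ℓ_{i,ī} = min(c_{i,r-1}, c_{i,r})`, `ℓ_{i,k̄} = d_{i,k}` (expressed here,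
equivalently, as formulas for the segment data of `T` in terms of `c = Ξ(T)`,
with `max(0, a-b)` the truncated subtraction on `ℕ`); moreover
`seg(T) = seg′(T) + e_D(T)` equals the number of positive roots where `Ξ(T)`
is nonzero. -/
theorem stmt7 (r : ℕ) (hr : 4 ≤ r) :
    Function.Bijective
      (fun (T : TabD r) (α : {v // v ∈ posRootsD r}) => XiD r T α.1) ∧
    (∀ T : TabD r, ∀ i : Fin (r - 1),
      (∀ k : ℕ, i.1 + 1 ≤ k → k ≤ r - 2 →
        ellD r T i (k + 1) = XiD r T (betaD r (i.1 + 1) k)) ∧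
      ellD r T i r
        = XiD r T (betaD r (i.1 + 1) (r - 1)) - XiD r T (betaDr r (i.1 + 1)) ∧
      ellD r T i (r + 1)
        = XiD r T (betaDr r (i.1 + 1)) - XiD r T (betaD r (i.1 + 1) (r - 1)) ∧
      ellD r T i (2 * r - i.1)
        = min (XiD r T (betaD r (i.1 + 1) (r - 1))) (XiD r T (betaDr r (i.1 + 1))) ∧
      (∀ k : ℕ, i.1 + 2 ≤ k → k ≤ r - 1 →
        ellD r T i (2 * r + 1 - k) = XiD r T (gammaD r (i.1 + 1) k))) ∧
    (∀ T : TabD r,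
      segD r T = ((posRootsD r).filter fun v => XiD r T v ≠ 0).card) :=
  ⟨XiD_bijective hr, recovery hr, seg_eq_card hr⟩
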